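/- Distributional invariance of the conditional convex order (Theorem 1.2, Axiom O8). For every real random variable Y and every random vector X = (X_1,…,X_p): (Y,X) =ccx (F_Y(Y), X) and (Y,X) =ccx (Y, (F_{X_1}(X_1),…,F_{X_p}(X_p))), where F_Y and F_{X_k} denote the respective cumulative distribution functions. -/
import Mathlib


open MeasureTheory ProbabilityTheory Set Filter

noncomputable section

namespace CCXPaper

variable {Ω Ω' : Type*} [MeasurableSpace Ω] [MeasurableSpace Ω']

/-- A measure is non-atomic in the measure-theoretic sense: every set of positive
measure contains a measurable subset of strictly smaller positive measure. -/
def Nonatomic (P : Measure Ω) : Prop :=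
  ∀ s : Set Ω, MeasurableSet s → 0 < P s →
    ∃ t : Set Ω, MeasurableSet t ∧ t ⊆ s ∧ 0 < P t ∧ P t < P s

/-- Cumulative distribution function of the real random variable `Y` under `P`. -/
def cdfRV (P : Measure Ω) (Y : Ω → ℝ) (y : ℝ) : ℝ :=
  (P {ω | Y ω ≤ y}).toReal

/-- Quantile function `q_Y(v) = inf {y | F_Y(y) ≥ v}`. -/
def quantRV (P : Measure Ω) (Y : Ω → ℝ) (v : ℝ) : ℝ :=
  sInf {y : ℝ | v ≤ cdfRV P Y y}

/-- Convex order between real random variables (on possibly different spaces):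
`E[φ(S)] ≤ E[φ(T)]` for every convex `φ : ℝ → ℝ`. -/
def CxLE (P : Measure Ω) (S : Ω → ℝ) (P' : Measure Ω') (T : Ω' → ℝ) : Prop :=
  ∀ φ : ℝ → ℝ, ConvexOn ℝ Set.univ φ →
    ∫ ω, φ (S ω) ∂P ≤ ∫ ω, φ (T ω) ∂P'

/-- Conditional probability `P(s | X)` as a random variable (a version of the
conditional expectation of the indicator of `s` given `σ(X)`). -/
def condProb {β : Type*} [MeasurableSpace β] (P : Measure Ω) (X : Ω → β) (s : Set Ω) :
    Ω → ℝ :=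
  P[s.indicator (fun _ => (1 : ℝ)) | MeasurableSpace.comap X inferInstance]

/-- Conditional survival probability `P(Y ≥ y | X)`. -/
def condProbGE {β : Type*} [MeasurableSpace β] (P : Measure Ω) (Y : Ω → ℝ) (X : Ω → β)
    (y : ℝ) : Ω → ℝ :=
  condProb P X {ω | y ≤ Y ω}

/-- Conditional strict survival probability `P(Y > y | X)`. -/
def condProbGT {β : Type*} [MeasurableSpace β] (P : Measure Ω) (Y : Ω → ℝ) (X : Ω → β)
    (y : ℝ) : Ω → ℝ :=
  condProb P X {ω | y < Y ω}

/-- Conditional cumulative probability `P(Y ≤ y | X)`. -/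
def condProbLE {β : Type*} [MeasurableSpace β] (P : Measure Ω) (Y : Ω → ℝ) (X : Ω → β)
    (y : ℝ) : Ω → ℝ :=
  condProb P X {ω | Y ω ≤ y}

/-- Conditional strict cumulative probability `P(Y < y | X)`. -/
def condProbLT {β : Type*} [MeasurableSpace β] (P : Measure Ω) (Y : Ω → ℝ) (X : Ω → β)
    (y : ℝ) : Ω → ℝ :=
  condProb P X {ω | Y ω < y}

/-- The conditional convex order `(Y, X) ⪯ccx (Y', X')`:
`P(Y ≥ q_Y(v) | X) ≤cx P(Y' ≥ q_{Y'}(v) | X')` for all `v ∈ (0,1)`. -/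
def CCX {β γ : Type*} [MeasurableSpace β] [MeasurableSpace γ]
    (P : Measure Ω) (Y : Ω → ℝ) (X : Ω → β)
    (P' : Measure Ω') (Y' : Ω' → ℝ) (X' : Ω' → γ) : Prop :=
  ∀ v ∈ Set.Ioo (0 : ℝ) 1,
    CxLE P (condProbGE P Y X (quantRV P Y v)) P' (condProbGE P' Y' X' (quantRV P' Y' v))

/-- Equality in the conditional convex order: `(Y, X) =ccx (Y', X')`. -/
def CCXeq {β γ : Type*} [MeasurableSpace β] [MeasurableSpace γ]
    (P : Measure Ω) (Y : Ω → ℝ) (X : Ω → β)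
    (P' : Measure Ω') (Y' : Ω' → ℝ) (X' : Ω' → γ) : Prop :=
  CCX P Y X P' Y' X' ∧ CCX P' Y' X' P Y X

/-- `Y` and `Z` are conditionally independent given `X`: for every Borel `B ⊆ ℝ`,
`P(Y ∈ B | (X, Z)) = P(Y ∈ B | X)` almost surely. -/
def CondIndepGiven {β γ : Type*} [MeasurableSpace β] [MeasurableSpace γ]
    (P : Measure Ω) (Y : Ω → ℝ) (Z : Ω → γ) (X : Ω → β) : Prop :=
  ∀ B : Set ℝ, MeasurableSet B →
    condProb P (fun ω => (X ω, Z ω)) (Y ⁻¹' B) =ᵐ[P] condProb P X (Y ⁻¹' B)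

/-- `Y` is perfectly dependent on `X`: `Y = f(X)` a.s. for some measurable `f`. -/
def PerfectDep {β : Type*} [MeasurableSpace β] (P : Measure Ω) (Y : Ω → ℝ) (X : Ω → β) :
    Prop :=
  ∃ f : β → ℝ, Measurable f ∧ Y =ᵐ[P] fun ω => f (X ω)

/-- Concordance order for bivariate random vectors `(T, S) ≤c (T', S')`. -/
def ConcordLE (P : Measure Ω) (T S : Ω → ℝ) (P' : Measure Ω') (T' S' : Ω' → ℝ) : Prop :=
  ∀ t s : ℝ,
    P {ω | T ω ≤ t ∧ S ω ≤ s} ≤ P' {ω | T' ω ≤ t ∧ S' ω ≤ s} ∧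
    P {ω | t < T ω ∧ s < S ω} ≤ P' {ω | t < T' ω ∧ s < S' ω}

/-- The bivariate random vector `(W₁, W₂)` is stochastically increasing (SI):
for each bounded increasing `f`, a version of `E[f(W₁) | W₂]` is an increasing
function of `W₂`. -/
def SIvec (P : Measure Ω) (W₁ W₂ : Ω → ℝ) : Prop :=
  ∀ f : ℝ → ℝ, Monotone f → (∃ C : ℝ, ∀ x, |f x| ≤ C) →
    ∃ m : ℝ → ℝ, Monotone m ∧
      (fun ω => m (W₂ ω)) =ᵐ[P]
        P[(fun ω => f (W₁ ω)) | MeasurableSpace.comap W₂ inferInstance]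

/-- `G` is a cumulative distribution function on `ℝ`. -/
def IsCDF (G : ℝ → ℝ) : Prop :=
  Monotone G ∧ (∀ y : ℝ, ContinuousWithinAt G (Set.Ici y) y) ∧
    Tendsto G atBot (nhds 0) ∧ Tendsto G atTop (nhds 1)

/-- `(F u)_{u ∈ (0,1)}` is a rearranged conditional distribution family for `(Y, X)`:
each `F u` is a cdf, `u ↦ F u y` is decreasing, and for each `y` the function
`u ↦ F u y` on `(0,1)` is a rearrangement of (i.e. equidistributed with)
`P(Y ≤ y | X)`. -/
def IsRearrangedFamily {β : Type*} [MeasurableSpace β]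
    (P : Measure Ω) (Y : Ω → ℝ) (X : Ω → β) (F : ℝ → ℝ → ℝ) : Prop :=
  (∀ u ∈ Set.Ioo (0 : ℝ) 1, IsCDF (F u)) ∧
  (∀ y : ℝ, AntitoneOn (fun u => F u y) (Set.Ioo (0 : ℝ) 1)) ∧
  (∀ y w : ℝ,
    volume {u ∈ Set.Ioo (0 : ℝ) 1 | w ≤ F u y} = P {ω | w ≤ condProbLE P Y X y ω})

/-- Rearranged quantile transform `q^{↑u}_{Y|X}(t) = inf {y | F_u(y) ≥ t}`. -/
def qArr (F : ℝ → ℝ → ℝ) (u t : ℝ) : ℝ :=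
  sInf {y : ℝ | t ≤ F u y}

/-- The uniform distribution on `(0,1)`. -/
def unif01 : Measure ℝ := volume.restrict (Set.Ioo (0 : ℝ) 1)

/-- `hs` is a decreasing rearrangement of `h : (0,1)^k → ℝ`. -/
def IsDecRearrangement {k : ℕ} (h : (Fin k → ℝ) → ℝ) (hs : ℝ → ℝ) : Prop :=
  AntitoneOn hs (Set.Ioo (0 : ℝ) 1) ∧
  ∀ w : ℝ,
    volume {t ∈ Set.Ioo (0 : ℝ) 1 | w ≤ hs t} =
      volume {x ∈ Set.pi Set.univ (fun _ : Fin k => Set.Ioo (0 : ℝ) 1) | w ≤ h x}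

/-- Schur order `f ≺_S g` for functions on unit cubes, via decreasing rearrangements. -/
def SchurLE {d d' : ℕ} (f : (Fin d → ℝ) → ℝ) (g : (Fin d' → ℝ) → ℝ) : Prop :=
  ∃ fs gs : ℝ → ℝ, IsDecRearrangement f fs ∧ IsDecRearrangement g gs ∧
    (∀ x ∈ Set.Ioo (0 : ℝ) 1,
      (∫ t in Set.Ioo (0 : ℝ) x, fs t) ≤ ∫ t in Set.Ioo (0 : ℝ) x, gs t) ∧
    (∫ t in Set.Ioo (0 : ℝ) 1, fs t) = ∫ t in Set.Ioo (0 : ℝ) 1, gs t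

/-- `κ` is a Markov-kernel version of the conditional cdf of `Y` given `X`. -/
def IsCondCDFKernel {β : Type*} [MeasurableSpace β]
    (P : Measure Ω) (Y : Ω → ℝ) (X : Ω → β) (κ : β → ℝ → ℝ) : Prop :=
  (∀ y : ℝ, Measurable fun x => κ x y) ∧
  ∀ y : ℝ, (fun ω => κ (X ω) y) =ᵐ[P] condProbLE P Y X y

/-- The dependence measure `ξ_φ(Y, X)` (with conditional cdf kernel `κ`). -/
def xiPhi {β : Type*} [MeasurableSpace β] (P : Measure Ω) (Y : Ω → ℝ) (X : Ω → β)
    (κ : β → ℝ → ℝ) (φ : ℝ → ℝ) : ℝ :=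
  (∫ y1, ∫ y, φ ((if y1 ≤ y then (1 : ℝ) else 0) - cdfRV P Y y) ∂(P.map Y) ∂(P.map Y))⁻¹ *
    ∫ x, ∫ y, φ (κ x y - cdfRV P Y y) ∂(P.map Y) ∂(P.map X)

/-- The dependence measure `Λ_φ(Y, X)` (with conditional cdf kernel `κ`). -/
def LamPhi {β : Type*} [MeasurableSpace β] (P : Measure Ω) (Y : Ω → ℝ) (X : Ω → β)
    (κ : β → ℝ → ℝ) (φ : ℝ → ℝ) : ℝ :=
  (∫ y12 : ℝ × ℝ, ∫ y,
      φ ((if y12.1 ≤ y then (1 : ℝ) else 0) - if y12.2 ≤ y then (1 : ℝ) else 0)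
      ∂(P.map Y) ∂((P.map Y).prod (P.map Y)))⁻¹ *
    ∫ x12 : β × β, ∫ y, φ (κ x12.1 y - κ x12.2 y) ∂(P.map Y) ∂((P.map X).prod (P.map X))

/-- `φ` vanishes at `0` and is strictly convex at `0`. -/
def StrictlyConvexAtZero (φ : ℝ → ℝ) : Prop :=
  φ 0 = 0 ∧
    ∀ s t lam : ℝ, s < 0 → 0 < t → 0 < lam → lam < 1 → lam * s + (1 - lam) * t = 0 →
      0 < lam * φ s + (1 - lam) * φ t

/-- `μ` is the (possibly degenerate) Gaussian distribution `N(m, S)` on `ℝ^d`,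
characterized via its characteristic function. -/
def IsGaussianPi {d : ℕ} (μ : Measure (Fin d → ℝ)) (m : Fin d → ℝ)
    (S : Matrix (Fin d) (Fin d) ℝ) : Prop :=
  ∀ t : Fin d → ℝ,
    (∫ x, Complex.exp (Complex.I * ((∑ i, t i * x i : ℝ) : ℂ)) ∂μ) =
      Complex.exp (Complex.I * ((∑ i, t i * m i : ℝ) : ℂ) -
        ((∑ i, ∑ j, t i * S i j * t j : ℝ) : ℂ) / 2)

/-- `Y` and `X` are comonotone. -/
def Comonotone (P : Measure Ω) (Y X : Ω → ℝ) : Prop :=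
  ∃ U : Ω → ℝ, Measurable U ∧ P.map U = unif01 ∧
    P.map (fun ω => (Y ω, X ω)) =
      P.map (fun ω => (quantRV P Y (U ω), quantRV P X (U ω)))

/-- `Y` and `X` are countermonotone. -/
def Countermonotone (P : Measure Ω) (Y X : Ω → ℝ) : Prop :=
  ∃ U : Ω → ℝ, Measurable U ∧ P.map U = unif01 ∧
    P.map (fun ω => (Y ω, X ω)) =
      P.map (fun ω => (quantRV P Y (U ω), quantRV P X (1 - U ω)))

end CCXPaper

namespace CCXAux
open CCXPaper

variable {Ω : Type*} [MeasurableSpace Ω] (P : Measure Ω) [IsProbabilityMeasure P] (Z : Ω → ℝ)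

lemma cdf_mono : Monotone (cdfRV P Z) := fun a b hab =>
  ENNReal.toReal_mono (measure_ne_top _ _) (measure_mono fun ω hω => le_trans hω hab)

lemma meas_le (hZ : Measurable Z) (y : ℝ) : MeasurableSet {ω | Z ω ≤ y} :=
  measurableSet_le hZ measurable_const

lemma exists_cdf_lt (hZ : Measurable Z) {v : ℝ} (h0 : 0 < v) : ∃ y : ℝ, cdfRV P Z y < v := by
  by_contra hc
  push_neg at hc
  have hempty : ⋂ n : ℕ, {ω | Z ω ≤ -(n : ℝ)} = ∅ := by
    ext ω
    simp only [mem_iInter, mem_setOf_eq, mem_empty_iff_false, iff_false, not_forall, not_le]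
    obtain ⟨n, hn⟩ := exists_nat_gt (-Z ω)
    exact ⟨n, by linarith⟩
  have hdir : Directed (· ⊇ ·) (fun n : ℕ => {ω | Z ω ≤ -(n : ℝ)}) := by
    intro m n
    refine ⟨max m n, fun ω hω => ?_, fun ω hω => ?_⟩ <;>
      · simp only [mem_setOf_eq] at hω ⊢
        have : (-(max m n : ℕ) : ℝ) ≤ -(m : ℝ) ∧ (-(max m n : ℕ) : ℝ) ≤ -(n : ℝ) := by
          constructor <;> simp [Nat.cast_le]
        linarith [this.1, this.2]
  have hiInf := Directed.measure_iInter (μ := P)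
    (fun n : ℕ => ((meas_le Z hZ (-(n:ℝ)))).nullMeasurableSet) hdir
    ⟨0, measure_ne_top _ _⟩
  have hlow : ∀ n : ℕ, ENNReal.ofReal v ≤ P {ω | Z ω ≤ -(n : ℝ)} := fun n =>
    ENNReal.ofReal_le_of_le_toReal (hc _)
  have : ENNReal.ofReal v ≤ P (⋂ n : ℕ, {ω | Z ω ≤ -(n : ℝ)}) := by
    rw [hiInf]; exact le_iInf hlow
  rw [hempty, measure_empty] at this
  have h2 : ENNReal.ofReal v = 0 := le_antisymm this bot_le
  rw [ENNReal.ofReal_eq_zero] at h2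
  linarith


lemma exists_le_cdf (hZ : Measurable Z) {v : ℝ} (h1 : v < 1) : ∃ y : ℝ, v ≤ cdfRV P Z y := by
  rcases le_or_gt v 0 with hv0 | hv0
  · exact ⟨0, hv0.trans ENNReal.toReal_nonneg⟩
  by_contra hc
  push_neg at hc
  have huniv : ⋃ n : ℕ, {ω | Z ω ≤ (n : ℝ)} = univ := by
    ext ω
    simp only [mem_iUnion, mem_setOf_eq, mem_univ, iff_true]
    obtain ⟨n, hn⟩ := exists_nat_gt (Z ω)
    exact ⟨n, hn.le⟩
  have hmono : Monotone (fun n : ℕ => {ω | Z ω ≤ (n : ℝ)}) := by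
    intro m n hmn ω hω
    simp only [mem_setOf_eq] at hω ⊢
    exact hω.trans (by exact_mod_cast hmn)
  have hsup := hmono.measure_iUnion (μ := P)
  rw [huniv, measure_univ] at hsup
  have hup : ∀ n : ℕ, P {ω | Z ω ≤ (n : ℝ)} ≤ ENNReal.ofReal v := fun n =>
    (ENNReal.le_ofReal_iff_toReal_le (measure_ne_top _ _) hv0.le).2 (hc _).le
  have : (1 : ENNReal) ≤ ENNReal.ofReal v := hsup.le.trans (iSup_le hup)
  rw [ENNReal.one_le_ofReal] at this
  linarith

lemma bddBelow_S {v : ℝ} (hZ : Measurable Z) (h0 : 0 < v) :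
    BddBelow {y : ℝ | v ≤ cdfRV P Z y} := by
  obtain ⟨y0, hy0⟩ := exists_cdf_lt P Z hZ h0
  refine ⟨y0, fun y hy => ?_⟩
  by_contra hlt
  push_neg at hlt
  exact absurd (lt_of_le_of_lt (le_trans hy (cdf_mono P Z hlt.le)) hy0) (lt_irrefl _)

lemma nonempty_S {v : ℝ} (hZ : Measurable Z) (h1 : v < 1) :
    Set.Nonempty {y : ℝ | v ≤ cdfRV P Z y} := exists_le_cdf P Z hZ h1

lemma le_cdf_quant (hZ : Measurable Z) {v : ℝ} (h0 : 0 < v) (h1 : v < 1) :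
    v ≤ cdfRV P Z (quantRV P Z v) := by
  set q := quantRV P Z v with hq
  have hne := nonempty_S P Z hZ h1
  have hIoc : ⋂ n : ℕ, {ω | Z ω ≤ q + 1 / ((n : ℝ) + 1)} = {ω | Z ω ≤ q} := by
    ext ω
    simp only [mem_iInter, mem_setOf_eq]
    constructor
    · intro h
      refine le_of_forall_pos_le_add fun ε hε => ?_
      obtain ⟨n, hn⟩ := exists_nat_one_div_lt hε
      exact (h n).trans (by linarith)
    · intro h n
      have : (0:ℝ) < 1 / ((n : ℝ) + 1) := by positivity
      linarith
  have hdir : Directed (· ⊇ ·) (fun n : ℕ => {ω | Z ω ≤ q + 1 / ((n : ℝ) + 1)}) := by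
    intro m n
    refine ⟨max m n, fun ω hω => ?_, fun ω hω => ?_⟩ <;>
      · simp only [mem_setOf_eq] at hω ⊢
        have h1' : (1:ℝ) / ((max m n : ℕ) + 1) ≤ 1 / ((m:ℝ) + 1) := by
          apply one_div_le_one_div_of_le (by positivity)
          have : (m:ℝ) ≤ ((max m n : ℕ):ℝ) := by exact_mod_cast le_max_left m n
          linarith
        have h2' : (1:ℝ) / ((max m n : ℕ) + 1) ≤ 1 / ((n:ℝ) + 1) := by
          apply one_div_le_one_div_of_le (by positivity)
          have : (n:ℝ) ≤ ((max m n : ℕ):ℝ) := by exact_mod_cast le_max_right m n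
          linarith
        linarith
  have hiInf := Directed.measure_iInter (μ := P)
    (fun n : ℕ => (meas_le Z hZ _).nullMeasurableSet) hdir ⟨0, measure_ne_top _ _⟩
  rw [hIoc] at hiInf
  have hterm : ∀ n : ℕ, ENNReal.ofReal v ≤ P {ω | Z ω ≤ q + 1 / ((n : ℝ) + 1)} := by
    intro n
    have hqlt : q < q + 1 / ((n : ℝ) + 1) := by
      have : (0:ℝ) < 1 / ((n : ℝ) + 1) := by positivity
      linarith
    obtain ⟨a, ha, halt⟩ := exists_lt_of_csInf_lt hne hqlt
    have : v ≤ cdfRV P Z (q + 1 / ((n : ℝ) + 1)) := le_trans ha (cdf_mono P Z halt.le)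
    exact ENNReal.ofReal_le_of_le_toReal this
  have : ENNReal.ofReal v ≤ P {ω | Z ω ≤ q} := by
    rw [hiInf]; exact le_iInf hterm
  calc v = (ENNReal.ofReal v).toReal := by rw [ENNReal.toReal_ofReal h0.le]
  _ ≤ cdfRV P Z q := ENNReal.toReal_mono (measure_ne_top _ _) this

lemma quant_le_iff (hZ : Measurable Z) {v z : ℝ} (h0 : 0 < v) (h1 : v < 1) :
    quantRV P Z v ≤ z ↔ v ≤ cdfRV P Z z := by
  constructor
  · intro h
    exact (le_cdf_quant P Z hZ h0 h1).trans (cdf_mono P Z h)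
  · intro h
    exact csInf_le (bddBelow_S P Z hZ h0) h


lemma Ioc_null (hZ : Measurable Z) {a b : ℝ} (hab : a ≤ b)
    (hF : cdfRV P Z b ≤ cdfRV P Z a) : P {ω | a < Z ω ∧ Z ω ≤ b} = 0 := by
  have hsub : {ω | Z ω ≤ a} ⊆ {ω | Z ω ≤ b} := fun ω hω => le_trans hω hab
  have hPeq : P {ω | Z ω ≤ b} = P {ω | Z ω ≤ a} :=
    le_antisymm ((ENNReal.toReal_le_toReal (measure_ne_top _ _) (measure_ne_top _ _)).1 hF)
      (measure_mono hsub)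
  have hset : {ω | a < Z ω ∧ Z ω ≤ b} = {ω | Z ω ≤ b} \ {ω | Z ω ≤ a} := by
    ext ω
    simp only [mem_setOf_eq, mem_diff, not_le]
    tauto
  rw [hset, measure_diff hsub (meas_le Z hZ a).nullMeasurableSet (measure_ne_top _ _), hPeq,
    tsub_self]

lemma flat_null (hZ : Measurable Z) (y : ℝ) :
    P {ω | y < Z ω ∧ cdfRV P Z (Z ω) ≤ cdfRV P Z y} = 0 := by
  set c := cdfRV P Z y with hc
  by_cases hmax : ∃ z₀, (y < z₀ ∧ cdfRV P Z z₀ ≤ c) ∧ ∀ z, y < z → cdfRV P Z z ≤ c → z ≤ z₀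
  · obtain ⟨z₀, ⟨hz1, hz2⟩, hz3⟩ := hmax
    refine measure_mono_null (fun ω hω => ?_) (Ioc_null P Z hZ hz1.le hz2)
    exact ⟨hω.1, hz3 _ hω.1 hω.2⟩
  · have hnomax : ∀ z₀, y < z₀ → cdfRV P Z z₀ ≤ c → ∃ z, (y < z ∧ cdfRV P Z z ≤ c) ∧ z₀ < z := by
      intro z₀ h1 h2
      by_contra hno
      push_neg at hno
      exact hmax ⟨z₀, ⟨h1, h2⟩, fun z hy hcz => by
        by_contra hgt
        push_neg at hgt
        exact absurd ((hno z ⟨hy, hcz⟩)) (not_le.2 hgt)⟩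
    have hcover : {ω | y < Z ω ∧ cdfRV P Z (Z ω) ≤ c} ⊆
        ⋃ r : ℚ, {ω | (y < (r:ℝ) ∧ cdfRV P Z r ≤ c) ∧ y < Z ω ∧ Z ω ≤ (r:ℝ)} := by
      intro ω ⟨h1, h2⟩
      obtain ⟨z, ⟨hz1, hz2⟩, hz3⟩ := hnomax (Z ω) h1 h2
      obtain ⟨r, hr1, hr2⟩ := exists_rat_btwn hz3
      refine mem_iUnion.2 ⟨r, ⟨⟨h1.trans hr1, ?_⟩, h1, hr1.le⟩⟩
      exact le_trans (cdf_mono P Z hr2.le) hz2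
    refine measure_mono_null hcover (measure_iUnion_null fun r => ?_)
    by_cases hg : y < (r:ℝ) ∧ cdfRV P Z r ≤ c
    · exact measure_mono_null (fun ω hω => hω.2) (Ioc_null P Z hZ hg.1.le hg.2)
    · have : {ω | (y < (r:ℝ) ∧ cdfRV P Z r ≤ c) ∧ y < Z ω ∧ Z ω ≤ (r:ℝ)} = (∅ : Set Ω) :=
        eq_empty_iff_forall_notMem.2 fun ω hω => hg hω.1
      rw [this, measure_empty]

lemma cdf_comp_set_eq (y : ℝ) :
    {ω | cdfRV P Z (Z ω) ≤ cdfRV P Z y} =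
      {ω | Z ω ≤ y} ∪ {ω | y < Z ω ∧ cdfRV P Z (Z ω) ≤ cdfRV P Z y} := by
  ext ω
  simp only [mem_setOf_eq, mem_union]
  constructor
  · intro h
    rcases le_or_gt (Z ω) y with h' | h'
    · exact Or.inl h'
    · exact Or.inr ⟨h', h⟩
  · rintro (h | h)
    · exact cdf_mono P Z h
    · exact h.2

lemma GFeq (hZ : Measurable Z) (y : ℝ) :
    cdfRV P (fun ω => cdfRV P Z (Z ω)) (cdfRV P Z y) = cdfRV P Z y := by
  have := cdf_comp_set_eq P Z y
  show (P {ω | cdfRV P Z (Z ω) ≤ cdfRV P Z y}).toReal = _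
  rw [this]
  have hP : P ({ω | Z ω ≤ y} ∪ {ω | y < Z ω ∧ cdfRV P Z (Z ω) ≤ cdfRV P Z y})
      = P {ω | Z ω ≤ y} := by
    refine le_antisymm ?_ (measure_mono subset_union_left)
    refine (measure_union_le _ _).trans ?_
    rw [flat_null P Z hZ y, add_zero]
  rw [hP]
  rfl


lemma oneDim (hZ : Measurable Z) {B : Set ℝ} (hB : MeasurableSet B) :
    ∃ B' : Set ℝ, MeasurableSet B' ∧
      (Z ⁻¹' B : Set Ω) =ᵐ[P] ((fun ω => cdfRV P Z (Z ω)) ⁻¹' B') := by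
  have hinst : (inferInstance : MeasurableSpace ℝ) =
      MeasurableSpace.generateFrom (Set.range Iic) := by
    rw [BorelSpace.measurable_eq (α := ℝ), borel_eq_generateFrom_Iic]
  have hgen : MeasurableSet[MeasurableSpace.generateFrom (Set.range Iic)] B := hinst ▸ hB
  refine MeasurableSpace.generateFrom_induction (Set.range Iic)
    (fun B _ => ∃ B' : Set ℝ, MeasurableSet B' ∧
      (Z ⁻¹' B : Set Ω) =ᵐ[P] ((fun ω => cdfRV P Z (Z ω)) ⁻¹' B'))
    ?_ ?_ ?_ ?_ B hgen
  · rintro t ⟨a, rfl⟩ -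
    refine ⟨Iic (cdfRV P Z a), measurableSet_Iic, ?_⟩
    have h1 : (Z ⁻¹' Iic a : Set Ω) = {ω | Z ω ≤ a} := rfl
    have h2 : ((fun ω => cdfRV P Z (Z ω)) ⁻¹' Iic (cdfRV P Z a) : Set Ω) =
        {ω | Z ω ≤ a} ∪ {ω | a < Z ω ∧ cdfRV P Z (Z ω) ≤ cdfRV P Z a} := by
      rw [show ((fun ω => cdfRV P Z (Z ω)) ⁻¹' Iic (cdfRV P Z a) : Set Ω) =
        {ω | cdfRV P Z (Z ω) ≤ cdfRV P Z a} from rfl, cdf_comp_set_eq P Z a]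
    rw [h1, h2]
    refine (MeasureTheory.ae_eq_set.2 ⟨?_, ?_⟩)
    · simp [Set.diff_eq_empty.2 Set.subset_union_left]
    · refine measure_mono_null (fun ω hω => ?_) (flat_null P Z hZ a)
      exact hω.1.resolve_left hω.2
  · exact ⟨∅, MeasurableSet.empty, by simp⟩
  · rintro t - ⟨B', hB', hae⟩
    exact ⟨B'ᶜ, hB'.compl, by rw [preimage_compl, preimage_compl]; exact hae.compl⟩
  · rintro f hf h
    choose g hg1 hg2 using h
    exact ⟨⋃ n, g n, MeasurableSet.iUnion hg1, by
      rw [preimage_iUnion, preimage_iUnion]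
      exact EventuallyEq.countable_iUnion hg2⟩


variable {p' : ℕ}

lemma piDim (X : Ω → Fin p' → ℝ) (hX : Measurable X) {B : Set (Fin p' → ℝ)}
    (hB : MeasurableSet B) :
    ∃ B' : Set (Fin p' → ℝ), MeasurableSet B' ∧
      (X ⁻¹' B : Set Ω) =ᵐ[P]
        ((fun ω k => cdfRV P (fun ω' => X ω' k) (X ω k)) ⁻¹' B') := by
  set mstar : MeasurableSpace (Fin p' → ℝ) :=
    { MeasurableSet' := fun B => MeasurableSet B ∧ ∃ B' : Set (Fin p' → ℝ),
        MeasurableSet B' ∧ (X ⁻¹' B : Set Ω) =ᵐ[P]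
          ((fun ω k => cdfRV P (fun ω' => X ω' k) (X ω k)) ⁻¹' B')
      measurableSet_empty := ⟨MeasurableSet.empty, ∅, MeasurableSet.empty, by simp⟩
      measurableSet_compl := by
        rintro t ⟨ht, B', hB', hae⟩
        exact ⟨ht.compl, B'ᶜ, hB'.compl, by
          rw [preimage_compl, preimage_compl]; exact hae.compl⟩
      measurableSet_iUnion := by
        intro f hf
        choose hmeas g hg1 hg2 using hf
        exact ⟨MeasurableSet.iUnion hmeas, ⋃ n, g n, MeasurableSet.iUnion hg1, by
          rw [preimage_iUnion, preimage_iUnion]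
          exact EventuallyEq.countable_iUnion hg2⟩ } with hmstar
  have hle : (MeasurableSpace.pi : MeasurableSpace (Fin p' → ℝ)) ≤ mstar := by
    refine iSup_le fun k => ?_
    rintro s ⟨C, hC, rfl⟩
    refine ⟨measurable_pi_apply k hC, ?_⟩
    obtain ⟨C', hC', hae⟩ :=
      oneDim P (fun ω => X ω k) ((measurable_pi_apply k).comp hX) hC
    exact ⟨(fun f : Fin p' → ℝ => f k) ⁻¹' C', measurable_pi_apply k hC', hae⟩
  exact (hle B hB).2

lemma condProb_congr_sigma {β γ : Type*} [MeasurableSpace β] [MeasurableSpace γ]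
    (X : Ω → β) (X' : Ω → γ) (hX : Measurable X) (hX' : Measurable X')
    (hle : MeasurableSpace.comap X' inferInstance ≤ MeasurableSpace.comap X inferInstance)
    (h : ∀ s : Set Ω, MeasurableSet[MeasurableSpace.comap X inferInstance] s →
      ∃ s' : Set Ω, MeasurableSet[MeasurableSpace.comap X' inferInstance] s' ∧ s =ᵐ[P] s')
    {t : Set Ω} (ht : MeasurableSet t) :
    condProb P X t =ᵐ[P] condProb P X' t := by
  have hmX : MeasurableSpace.comap X inferInstance ≤ (inferInstance : MeasurableSpace Ω) :=
    hX.comap_le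
  have hmX' : MeasurableSpace.comap X' inferInstance ≤ (inferInstance : MeasurableSpace Ω) :=
    hX'.comap_le
  have hf : Integrable (t.indicator fun _ => (1 : ℝ)) P :=
    (integrable_const (1 : ℝ)).indicator ht
  have key : condProb P X' t =ᵐ[P]
      P[t.indicator (fun _ => (1 : ℝ)) | MeasurableSpace.comap X inferInstance] := by
    refine ae_eq_condExp_of_forall_setIntegral_eq hmX hf
      (fun s _ _ => integrable_condExp.integrableOn) (fun s hs _ => ?_)
      (StronglyMeasurable.aestronglyMeasurable (stronglyMeasurable_condExp.mono hle))
    obtain ⟨s', hs', hae⟩ := h s hs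
    rw [setIntegral_congr_set hae]
    exact (setIntegral_condExp hmX' hf hs').trans (setIntegral_congr_set hae.symm)
  exact key.symm

end CCXAux


open CCXPaper CCXAux in
/-- Distributional invariance:
`(Y, X) =ccx (F_Y(Y), X)` and `(Y, X) =ccx (Y, (F_{X_1}(X_1), …, F_{X_p}(X_p)))`. -/
theorem ccx_distributional_invariance
    {Ω : Type*} [MeasurableSpace Ω] (P : Measure Ω) [IsProbabilityMeasure P]
    (hPna : Nonatomic P)
    {p : ℕ} (Y : Ω → ℝ) (X : Ω → Fin p → ℝ)
    (hY : Measurable Y) (hX : Measurable X) :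
    CCXeq P Y X P (fun ω => cdfRV P Y (Y ω)) X ∧
      CCXeq P Y X P Y (fun ω k => cdfRV P (fun ω' => X ω' k) (X ω k)) := by
  constructor
  · -- Part 1: (Y, X) =ccx (F_Y(Y), X)
    set W : Ω → ℝ := fun ω => cdfRV P Y (Y ω) with hWdef
    have hW : Measurable W := (cdf_mono P Y).measurable.comp hY
    have hset : ∀ v ∈ Set.Ioo (0:ℝ) 1,
        {ω | quantRV P Y v ≤ Y ω} = {ω | quantRV P W v ≤ W ω} := by
      intro v hv
      ext ω
      rw [mem_setOf_eq, mem_setOf_eq, quant_le_iff P Y hY hv.1 hv.2,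
        quant_le_iff P W hW hv.1 hv.2]
      have hGF : cdfRV P W (W ω) = W ω := GFeq P Y hY (Y ω)
      rw [hGF]
    have hcond : ∀ v ∈ Set.Ioo (0:ℝ) 1,
        condProbGE P Y X (quantRV P Y v) = condProbGE P W X (quantRV P W v) := by
      intro v hv
      show condProb P X {ω | quantRV P Y v ≤ Y ω} = condProb P X {ω | quantRV P W v ≤ W ω}
      rw [hset v hv]
    exact ⟨fun v hv φ hφ => le_of_eq (by rw [hcond v hv]),
      fun v hv φ hφ => le_of_eq (by rw [hcond v hv])⟩
  · -- Part 2: (Y, X) =ccx (Y, F(X))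
    set X' : Ω → Fin p → ℝ := fun ω k => cdfRV P (fun ω' => X ω' k) (X ω k) with hX'def
    set g : (Fin p → ℝ) → (Fin p → ℝ) := fun u k => cdfRV P (fun ω' => X ω' k) (u k)
      with hgdef
    have hg : Measurable g :=
      measurable_pi_lambda _ fun k =>
        ((cdf_mono P (fun ω' => X ω' k)).measurable).comp (measurable_pi_apply k)
    have hX' : Measurable X' := hg.comp hX
    have hle : MeasurableSpace.comap X' inferInstance ≤ MeasurableSpace.comap X
        inferInstance := by
      have hcomp : MeasurableSpace.comap X' (inferInstance : MeasurableSpace (Fin p → ℝ)) =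
          MeasurableSpace.comap X
            (MeasurableSpace.comap g (inferInstance : MeasurableSpace (Fin p → ℝ))) :=
        (MeasurableSpace.comap_comp (f := g) (g := X)).symm
      rw [hcomp]
      exact MeasurableSpace.comap_mono hg.comap_le
    have hsets : ∀ s : Set Ω, MeasurableSet[MeasurableSpace.comap X inferInstance] s →
        ∃ s' : Set Ω, MeasurableSet[MeasurableSpace.comap X' inferInstance] s' ∧
          s =ᵐ[P] s' := by
      rintro s ⟨B, hB, rfl⟩
      obtain ⟨B', hB', hae⟩ := piDim P X hX hB
      exact ⟨X' ⁻¹' B', ⟨B', hB', rfl⟩, hae⟩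
    have hcond : ∀ t : Set Ω, MeasurableSet t →
        condProb P X t =ᵐ[P] condProb P X' t := fun t ht =>
      condProb_congr_sigma P X X' hX hX' hle hsets ht
    have key : ∀ v ∈ Set.Ioo (0:ℝ) 1,
        condProbGE P Y X (quantRV P Y v) =ᵐ[P] condProbGE P Y X' (quantRV P Y v) := by
      intro v hv
      exact hcond {ω | quantRV P Y v ≤ Y ω} (measurableSet_le measurable_const hY)
    refine ⟨fun v hv φ hφ => le_of_eq ?_, fun v hv φ hφ => le_of_eq ?_⟩
    · exact integral_congr_ae ((key v hv).fun_comp φ)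
    · exact integral_congr_ae (((key v hv).symm).fun_comp φ)
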